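/- Let M ∈ ℝ^{m×n} have unit-norm columns and satisfy the RIP of order 2k with constant δ ≤ 0.445 (δ > 0). Let x ∈ ℝⁿ have support L with |L| = k and let y = Mx. Let T ⊆ {1,…,n} be any set of indices with |T| = k and T ≠ L. Then there exist indices i ∈ L∖T and j ∈ T∖L such that ⟨R_T m_(i), y⟩² / ‖R_T m_(i)‖² ≥ ⟨R_{T∖j} m_(j), y⟩² / ‖R_{T∖j} m_(j)‖²; that is, the decrease in squared residual obtained by adding the correct atom m_(i) to T is at least the increase in squared residual caused by removing the wrong atom m_(j) from T. -/

import Mathlib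

open Matrix

noncomputable section

/-- `M` satisfies the RIP of order `s` with constant `δ` if
`(1−δ)‖v‖² ≤ ‖Mv‖² ≤ (1+δ)‖v‖²` for every `v` with at most `s` nonzero entries. -/
def RIP {m n : ℕ} (M : Matrix (Fin m) (Fin n) ℝ) (s : ℕ) (δ : ℝ) : Prop :=
  ∀ v : Fin n → ℝ, (∃ S : Finset (Fin n), S.card ≤ s ∧ ∀ i ∉ S, v i = 0) →
    (1 - δ) * (v ⬝ᵥ v) ≤ (M *ᵥ v) ⬝ᵥ (M *ᵥ v) ∧
      (M *ᵥ v) ⬝ᵥ (M *ᵥ v) ≤ (1 + δ) * (v ⬝ᵥ v)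

/-- `M_T`: the submatrix of `M` of the columns indexed by `T`. -/
def colsOf {m n : ℕ} (M : Matrix (Fin m) (Fin n) ℝ) (T : Finset (Fin n)) :
    Matrix (Fin m) {i // i ∈ T} ℝ :=
  M.submatrix id fun j => (j : Fin n)

/-- `P_T = M_T (M_TᵀM_T)⁻¹ M_Tᵀ`. -/
def projT {m n : ℕ} (M : Matrix (Fin m) (Fin n) ℝ) (T : Finset (Fin n)) :
    Matrix (Fin m) (Fin m) ℝ :=
  colsOf M T * ((colsOf M T)ᵀ * colsOf M T)⁻¹ * (colsOf M T)ᵀ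

/-- `R_T = I − P_T`. -/
def residT {m n : ℕ} (M : Matrix (Fin m) (Fin n) ℝ) (T : Finset (Fin n)) :
    Matrix (Fin m) (Fin m) ℝ :=
  1 - projT M T

namespace StmtAux

variable {m n : ℕ}

def extend (S : Finset (Fin n)) (v : {i // i ∈ S} → ℝ) : Fin n → ℝ :=
  fun i => if h : i ∈ S then v ⟨i, h⟩ else 0

lemma extend_mem {S : Finset (Fin n)} (v : {i // i ∈ S} → ℝ) {i} (h : i ∈ S) :
    extend S v i = v ⟨i, h⟩ := dif_pos h

lemma extend_not_mem {S : Finset (Fin n)} (v : {i // i ∈ S} → ℝ) {i} (h : i ∉ S) :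
    extend S v i = 0 := dif_neg h

lemma sum_extend (S : Finset (Fin n)) (v : {i // i ∈ S} → ℝ) (f : Fin n → ℝ → ℝ)
    (hf : ∀ i, f i 0 = 0) :
    ∑ i : Fin n, f i (extend S v i) = ∑ j : {i // i ∈ S}, f (j : Fin n) (v j) := by
  have h1 : ∑ i : Fin n, f i (extend S v i) = ∑ i ∈ S, f i (extend S v i) := by
    symm
    apply Finset.sum_subset (Finset.subset_univ S)
    intro i _ hi
    rw [extend_not_mem v hi, hf]
  rw [h1, ← Finset.sum_attach S (fun i => f i (extend S v i)), Finset.univ_eq_attach]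
  exact Finset.sum_congr rfl (fun j _ => by rw [extend_mem v j.2])

lemma mulVec_extend (M : Matrix (Fin m) (Fin n) ℝ) (S : Finset (Fin n)) (v : {i // i ∈ S} → ℝ) :
    M *ᵥ extend S v = colsOf M S *ᵥ v := by
  funext r
  show ∑ i : Fin n, M r i * extend S v i = ∑ j : {i // i ∈ S}, colsOf M S r j * v j
  exact sum_extend S v (fun i t => M r i * t) (fun i => mul_zero _)

lemma dot_extend (S : Finset (Fin n)) (v : {i // i ∈ S} → ℝ) :
    extend S v ⬝ᵥ extend S v = v ⬝ᵥ v := by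
  show ∑ i : Fin n, extend S v i * extend S v i = _
  exact sum_extend S v (fun i t => t * t) (fun i => mul_zero _)

end StmtAux


namespace StmtAux

variable {m n : ℕ}

lemma dot_self_nonneg (v : Fin m → ℝ) : 0 ≤ v ⬝ᵥ v :=
  Finset.sum_nonneg fun i _ => mul_self_nonneg _

lemma dot_cols (M : Matrix (Fin m) (Fin n) ℝ) (S : Finset (Fin n)) (v : {i // i ∈ S} → ℝ)
    (u : Fin m → ℝ) : u ⬝ᵥ (colsOf M S *ᵥ v) = ((colsOf M S)ᵀ *ᵥ u) ⬝ᵥ v := by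
  rw [Matrix.dotProduct_mulVec, Matrix.mulVec_transpose]

lemma gram_posdef (M : Matrix (Fin m) (Fin n) ℝ) {k : ℕ} {δ : ℝ} (hδ : δ < 1)
    (hRIP : RIP M (2 * k) δ) (S : Finset (Fin n)) (hS : S.card ≤ 2 * k) :
    (((colsOf M S)ᵀ * colsOf M S)).PosDef := by
  rw [Matrix.posDef_iff_dotProduct_mulVec]
  constructor
  · unfold Matrix.IsHermitian
    rw [Matrix.conjTranspose_eq_transpose_of_trivial, Matrix.transpose_mul,
      Matrix.transpose_transpose]
  · intro v hv
    have hsp : ∃ Sc : Finset (Fin n), Sc.card ≤ 2 * k ∧ ∀ i ∉ Sc, extend S v i = 0 :=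
      ⟨S, hS, fun i hi => extend_not_mem v hi⟩
    have h := (hRIP (extend S v) hsp).1
    rw [dot_extend, mulVec_extend] at h
    have hvv : 0 < v ⬝ᵥ v := by
      rcases Function.ne_iff.mp hv with ⟨j, hj⟩
      have : v j * v j ≤ v ⬝ᵥ v := by
        apply Finset.single_le_sum (fun i _ => mul_self_nonneg (v i)) (Finset.mem_univ j)
      have hj' : 0 < v j * v j := mul_self_pos.mpr hj
      linarith
    have : 0 < (colsOf M S *ᵥ v) ⬝ᵥ (colsOf M S *ᵥ v) := by nlinarith
    calc (0:ℝ) < (colsOf M S *ᵥ v) ⬝ᵥ (colsOf M S *ᵥ v) := this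
      _ = dotProduct (star v) (((colsOf M S)ᵀ * colsOf M S) *ᵥ v) := by
          rw [star_trivial, ← Matrix.mulVec_mulVec, Matrix.dotProduct_mulVec, Matrix.mulVec_transpose, dotProduct_comm]

lemma symm_dot_comm {Q : Matrix (Fin m) (Fin m) ℝ} (hsym : Qᵀ = Q)
    (u w : Fin m → ℝ) : (Q *ᵥ u) ⬝ᵥ w = u ⬝ᵥ (Q *ᵥ w) := by
  rw [Matrix.dotProduct_mulVec, ← Matrix.mulVec_transpose, hsym]

lemma symm_idem_dot {Q : Matrix (Fin m) (Fin m) ℝ} (hsym : Qᵀ = Q) (hidem : Q * Q = Q)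
    (u : Fin m → ℝ) : (Q *ᵥ u) ⬝ᵥ (Q *ᵥ u) = u ⬝ᵥ (Q *ᵥ u) := by
  rw [symm_dot_comm hsym, Matrix.mulVec_mulVec, hidem]

section proj
variable (M : Matrix (Fin m) (Fin n) ℝ) (S : Finset (Fin n))
  (hG : IsUnit ((colsOf M S)ᵀ * colsOf M S).det)

lemma gram_transpose : ((colsOf M S)ᵀ * colsOf M S)ᵀ = (colsOf M S)ᵀ * colsOf M S := by
  rw [Matrix.transpose_mul, Matrix.transpose_transpose]

include hG

lemma projT_mul_cols : projT M S * colsOf M S = colsOf M S := by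
  unfold projT
  rw [Matrix.mul_assoc, Matrix.mul_assoc, Matrix.nonsing_inv_mul _ hG, Matrix.mul_one]

lemma cols_mul_projT : (colsOf M S)ᵀ * projT M S = (colsOf M S)ᵀ := by
  unfold projT
  rw [← Matrix.mul_assoc, ← Matrix.mul_assoc, Matrix.mul_nonsing_inv _ hG, Matrix.one_mul]

lemma projT_transpose : (projT M S)ᵀ = projT M S := by
  unfold projT
  rw [Matrix.transpose_mul, Matrix.transpose_mul, Matrix.transpose_transpose,
    Matrix.transpose_nonsing_inv, gram_transpose, Matrix.mul_assoc]

lemma projT_idem : projT M S * projT M S = projT M S := by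
  show projT M S * (colsOf M S * ((colsOf M S)ᵀ * colsOf M S)⁻¹ * (colsOf M S)ᵀ) = _
  rw [← Matrix.mul_assoc, ← Matrix.mul_assoc, projT_mul_cols M S hG]
  rfl

lemma residT_transpose : (residT M S)ᵀ = residT M S := by
  unfold residT
  rw [Matrix.transpose_sub, Matrix.transpose_one, projT_transpose M S hG]

lemma residT_idem : residT M S * residT M S = residT M S := by
  unfold residT
  rw [Matrix.sub_mul, Matrix.mul_sub, Matrix.mul_sub, Matrix.one_mul, Matrix.one_mul,
    Matrix.mul_one, projT_idem M S hG]
  abel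

lemma cols_mul_residT : (colsOf M S)ᵀ * residT M S = 0 := by
  unfold residT
  rw [Matrix.mul_sub, Matrix.mul_one, cols_mul_projT M S hG, sub_self]

lemma residT_mul_cols : residT M S * colsOf M S = 0 := by
  unfold residT
  rw [Matrix.sub_mul, Matrix.one_mul, projT_mul_cols M S hG, sub_self]

lemma resid_dot_self (u : Fin m → ℝ) :
    (residT M S *ᵥ u) ⬝ᵥ (residT M S *ᵥ u) = u ⬝ᵥ (residT M S *ᵥ u) :=
  symm_idem_dot (residT_transpose M S hG) (residT_idem M S hG) u

lemma resid_dot_le (u : Fin m → ℝ) :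
    (residT M S *ᵥ u) ⬝ᵥ (residT M S *ᵥ u) ≤ u ⬝ᵥ u := by
  have h1 : (projT M S *ᵥ u) ⬝ᵥ (projT M S *ᵥ u) = u ⬝ᵥ (projT M S *ᵥ u) :=
    symm_idem_dot (projT_transpose M S hG) (projT_idem M S hG) u
  have h2 : 0 ≤ u ⬝ᵥ (projT M S *ᵥ u) := h1 ▸ dot_self_nonneg _
  have h3 : u ⬝ᵥ (residT M S *ᵥ u) = u ⬝ᵥ u - u ⬝ᵥ (projT M S *ᵥ u) := by
    unfold residT
    rw [Matrix.sub_mulVec, dotProduct_sub, Matrix.one_mulVec]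
  rw [resid_dot_self M S hG u, h3]
  linarith

end proj

lemma col_single (M : Matrix (Fin m) (Fin n) ℝ) (i : Fin n) :
    M *ᵥ Pi.single i 1 = fun r => M r i := by
  rw [Matrix.mulVec_single]
  funext r; exact mul_one _

/-- `P_S *ᵥ v` expressed as a combination of columns. -/
lemma projT_mulVec (M : Matrix (Fin m) (Fin n) ℝ) (S : Finset (Fin n)) (v : Fin m → ℝ) :
    projT M S *ᵥ v =
      colsOf M S *ᵥ (((colsOf M S)ᵀ * colsOf M S)⁻¹ *ᵥ ((colsOf M S)ᵀ *ᵥ v)) := by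
  rw [Matrix.mulVec_mulVec, Matrix.mulVec_mulVec]
  rfl

/-- residual column written as `M *ᵥ u` for a sparse `u`. -/
lemma resid_col_eq (M : Matrix (Fin m) (Fin n) ℝ) (S : Finset (Fin n)) (i : Fin n) :
    residT M S *ᵥ (fun r => M r i) =
      M *ᵥ (Pi.single i 1 -
        extend S (((colsOf M S)ᵀ * colsOf M S)⁻¹ *ᵥ ((colsOf M S)ᵀ *ᵥ (fun r => M r i)))) := by
  rw [Matrix.mulVec_sub, col_single, mulVec_extend, ← projT_mulVec]
  show (1 - projT M S) *ᵥ _ = _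
  rw [Matrix.sub_mulVec, Matrix.one_mulVec]

lemma resid_col_lb (M : Matrix (Fin m) (Fin n) ℝ) {k : ℕ} {δ : ℝ} (hδ : δ < 1)
    (hRIP : RIP M (2 * k) δ) (S : Finset (Fin n)) (hS : S.card + 1 ≤ 2 * k)
    {i : Fin n} (hi : i ∉ S) :
    1 - δ ≤ (residT M S *ᵥ (fun r => M r i)) ⬝ᵥ (residT M S *ᵥ (fun r => M r i)) := by
  set c := ((colsOf M S)ᵀ * colsOf M S)⁻¹ *ᵥ ((colsOf M S)ᵀ *ᵥ (fun r => M r i)) with hc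
  set u : Fin n → ℝ := Pi.single i 1 - extend S c with hu
  have hsupp : ∀ l ∉ insert i S, u l = 0 := by
    intro l hl
    simp only [Finset.mem_insert, not_or] at hl
    rw [hu, Pi.sub_apply, Pi.single_eq_of_ne hl.1, extend_not_mem c hl.2, sub_zero]
  have hcard : (insert i S).card ≤ 2 * k := by
    calc (insert i S).card ≤ S.card + 1 := Finset.card_insert_le i S
      _ ≤ 2 * k := hS
  have h := (hRIP u ⟨insert i S, hcard, hsupp⟩).1
  rw [← resid_col_eq] at h
  have hui : u i = 1 := by
    rw [hu, Pi.sub_apply, Pi.single_eq_same, extend_not_mem c hi, sub_zero]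
  have huu : 1 ≤ u ⬝ᵥ u := by
    have := Finset.single_le_sum (f := fun l => u l * u l)
      (fun l _ => mul_self_nonneg (u l)) (Finset.mem_univ i)
    simp only [hui, mul_one] at this
    exact this
  nlinarith

end StmtAux


open StmtAux in
set_option maxHeartbeats 1000000 in
theorem stmt8 {m n k : ℕ} (M : Matrix (Fin m) (Fin n) ℝ) (δ : ℝ)
    (hδ0 : 0 < δ) (hδ1 : δ ≤ 0.445)
    (hunit : ∀ j : Fin n, (fun r => M r j) ⬝ᵥ (fun r => M r j) = 1)
    (hRIP : RIP M (2 * k) δ)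
    (x : Fin n → ℝ) (L : Finset (Fin n)) (hsupp : ∀ i, x i ≠ 0 ↔ i ∈ L)
    (hL : L.card = k) (y : Fin m → ℝ) (hy : y = M *ᵥ x)
    (T : Finset (Fin n)) (hT : T.card = k) (hTL : T ≠ L) :
    ∃ i ∈ L \ T, ∃ j ∈ T \ L,
      ((residT M T *ᵥ fun r => M r i) ⬝ᵥ y) ^ 2 /
          ((residT M T *ᵥ fun r => M r i) ⬝ᵥ (residT M T *ᵥ fun r => M r i)) ≥
        ((residT M (T.erase j) *ᵥ fun r => M r j) ⬝ᵥ y) ^ 2 /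
          ((residT M (T.erase j) *ᵥ fun r => M r j) ⬝ᵥ
            (residT M (T.erase j) *ᵥ fun r => M r j)) := by
  classical
  have hδ1' : δ < 1 := by norm_num at hδ1 ⊢; linarith
  have hδhalf : δ ≤ 1/2 := by norm_num at hδ1 ⊢; linarith
  -- nonemptiness of the difference sets
  have hBne : (L \ T).Nonempty := by
    rw [Finset.sdiff_nonempty]
    intro hsub
    exact hTL ((Finset.eq_of_subset_of_card_le hsub (by rw [hL, hT])).symm)
  have hAne : (T \ L).Nonempty := by
    rw [Finset.sdiff_nonempty]
    intro hsub
    exact hTL (Finset.eq_of_subset_of_card_le hsub (by rw [hL, hT]))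
  have hcardAB : (T \ L).card = (L \ T).card := Finset.card_sdiff_comm (by rw [hT, hL])
  have hk1 : 1 ≤ k := by
    rcases hBne with ⟨i0, hi0⟩
    have : 0 < L.card := Finset.card_pos.mpr ⟨i0, (Finset.mem_sdiff.mp hi0).1⟩
    omega
  have hTk : T.card ≤ 2 * k := by omega
  have hGT : IsUnit ((colsOf M T)ᵀ * colsOf M T).det :=
    isUnit_iff_ne_zero.mpr (ne_of_gt (gram_posdef M hδ1' hRIP T hTk).det_pos)
  -- main objects
  set r : Fin m → ℝ := residT M T *ᵥ y with hr
  set z : {i // i ∈ T} → ℝ :=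
    ((colsOf M T)ᵀ * colsOf M T)⁻¹ *ᵥ ((colsOf M T)ᵀ *ᵥ y) with hz
  set zf : Fin n → ℝ := extend T z with hzf
  set w : Fin n → ℝ := x - zf with hw
  have hPy : projT M T *ᵥ y = colsOf M T *ᵥ z := projT_mulVec M T y
  have hy_split : y = r + colsOf M T *ᵥ z := by
    rw [hr, ← hPy]
    show y = (1 - projT M T) *ᵥ y + _
    rw [Matrix.sub_mulVec, Matrix.one_mulVec]
    abel
  have hMw : M *ᵥ w = r := by
    rw [hw, Matrix.mulVec_sub, ← hy, hzf, mulVec_extend, ← hPy]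
    show y - _ = (1 - projT M T) *ᵥ y
    rw [Matrix.sub_mulVec, Matrix.one_mulVec]
  -- columns of T are orthogonal to r
  have hAr : (colsOf M T)ᵀ *ᵥ r = 0 := by
    rw [hr, Matrix.mulVec_mulVec, cols_mul_residT M T hGT, Matrix.zero_mulVec]
  have hmr0 : ∀ l ∈ T, (fun ρ => M ρ l) ⬝ᵥ r = 0 := by
    intro l hl
    have := congrFun hAr ⟨l, hl⟩
    exact this
  -- RIP on w
  have hwsupp : ∀ i ∉ L ∪ T, w i = 0 := by
    intro i hi
    rw [Finset.mem_union, not_or] at hi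
    show x i - zf i = 0
    rw [hzf, extend_not_mem z hi.2, sub_zero]
    by_contra hxi
    exact hi.1 ((hsupp i).mp hxi)
  have hLTcard : (L ∪ T).card ≤ 2 * k := by
    calc (L ∪ T).card ≤ L.card + T.card := Finset.card_union_le L T
      _ ≤ 2 * k := by omega
  have hripw := (hRIP w ⟨L ∪ T, hLTcard, hwsupp⟩).1
  rw [hMw] at hripw
  -- quantities
  set ρ : ℝ := r ⬝ᵥ r with hρdef
  set a2 : ℝ := ∑ i ∈ L \ T, x i ^ 2 with ha2
  set c2 : ℝ := ∑ j ∈ T \ L, zf j ^ 2 with hc2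
  set Sb : ℝ := ∑ i ∈ L \ T, ((fun ρ => M ρ i) ⬝ᵥ r) ^ 2 with hSb
  have hρ0 : 0 ≤ ρ := dot_self_nonneg r
  have ha20 : 0 ≤ a2 := Finset.sum_nonneg fun i _ => sq_nonneg _
  have hc20 : 0 ≤ c2 := Finset.sum_nonneg fun i _ => sq_nonneg _
  have hSb0 : 0 ≤ Sb := Finset.sum_nonneg fun i _ => sq_nonneg _
  have ha2pos : 0 < a2 := by
    rcases hBne with ⟨i0, hi0⟩
    have hx0 : x i0 ≠ 0 := (hsupp i0).mpr (Finset.mem_sdiff.mp hi0).1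
    have : x i0 ^ 2 ≤ a2 :=
      Finset.single_le_sum (f := fun i => x i ^ 2) (fun i _ => sq_nonneg _) hi0
    have : 0 < x i0 ^ 2 := by positivity
    linarith [Finset.single_le_sum (f := fun i => x i ^ 2)
      (fun i _ => sq_nonneg (x i)) hi0]
  -- w ⬝ w ≥ a2 + c2
  have hww : a2 + c2 ≤ w ⬝ᵥ w := by
    have hdisj : Disjoint (L \ T) (T \ L) := disjoint_sdiff_sdiff
    have hsub : ∑ l ∈ (L \ T) ∪ (T \ L), w l * w l ≤ ∑ l : Fin n, w l * w l :=
      Finset.sum_le_sum_of_subset_of_nonneg (Finset.subset_univ _)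
        (fun l _ _ => mul_self_nonneg _)
    rw [Finset.sum_union hdisj] at hsub
    have hBsum : ∑ l ∈ L \ T, w l * w l = a2 := by
      apply Finset.sum_congr rfl
      intro l hl
      have hlT : l ∉ T := (Finset.mem_sdiff.mp hl).2
      show (x l - zf l) * (x l - zf l) = x l ^ 2
      rw [hzf, extend_not_mem z hlT, sub_zero, sq]
    have hAsum : ∑ l ∈ T \ L, w l * w l = c2 := by
      apply Finset.sum_congr rfl
      intro l hl
      have hlL : l ∉ L := (Finset.mem_sdiff.mp hl).2
      have hxl : x l = 0 := by
        by_contra hxl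
        exact hlL ((hsupp l).mp hxl)
      show (x l - zf l) * (x l - zf l) = zf l ^ 2
      rw [hxl, zero_sub, neg_mul_neg, sq]
    rw [hBsum, hAsum] at hsub
    exact hsub
  -- ρ = ∑_{i ∈ B} ⟨m i, r⟩ * x i
  have hρsum : ρ = ∑ i ∈ L \ T, ((fun ρ => M ρ i) ⬝ᵥ r) * x i := by
    have e1 : ρ = ∑ l : Fin n, ((fun ρ => M ρ l) ⬝ᵥ r) * w l := by
      calc ρ = r ⬝ᵥ (M *ᵥ w) := by rw [hMw]
        _ = (r ᵥ* M) ⬝ᵥ w := Matrix.dotProduct_mulVec r M w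
        _ = ∑ l : Fin n, ((fun ρ => M ρ l) ⬝ᵥ r) * w l := by
            apply Finset.sum_congr rfl
            intro l _
            congr 1
            simp [Matrix.vecMul, dotProduct, mul_comm]
    rw [e1]
    have e2 : ∑ l : Fin n, ((fun ρ => M ρ l) ⬝ᵥ r) * w l
        = ∑ l ∈ L \ T, ((fun ρ => M ρ l) ⬝ᵥ r) * w l := by
      symm
      apply Finset.sum_subset (Finset.subset_univ _)
      intro l _ hl
      by_cases hlT : l ∈ T
      · rw [hmr0 l hlT, zero_mul]
      · have hlL : l ∉ L := fun hlL => hl (Finset.mem_sdiff.mpr ⟨hlL, hlT⟩)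
        have hxl : x l = 0 := by
          by_contra hxl
          exact hlL ((hsupp l).mp hxl)
        have hwl : w l = 0 := by
          show x l - zf l = 0
          rw [hxl, hzf, extend_not_mem z hlT, sub_zero]
        rw [hwl, mul_zero]
    rw [e2]
    apply Finset.sum_congr rfl
    intro l hl
    have hlT : l ∉ T := (Finset.mem_sdiff.mp hl).2
    have hwl : w l = x l := by
      show x l - zf l = x l
      rw [hzf, extend_not_mem z hlT, sub_zero]
    rw [hwl]
  -- Cauchy-Schwarz
  have hCS : ρ ^ 2 ≤ Sb * a2 := by
    calc ρ ^ 2 = (∑ i ∈ L \ T, ((fun ρ => M ρ i) ⬝ᵥ r) * x i) ^ 2 := by rw [hρsum]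
      _ ≤ (∑ i ∈ L \ T, ((fun ρ => M ρ i) ⬝ᵥ r) ^ 2) * ∑ i ∈ L \ T, x i ^ 2 :=
          Finset.sum_mul_sq_le_sq_mul_sq _ _ _
      _ = Sb * a2 := rfl
  -- key numeric inequality
  have hρge : (a2 + c2) / 2 ≤ ρ := by
    nlinarith [mul_le_mul_of_nonneg_left hww (by linarith : (0:ℝ) ≤ 1 - δ)]
  have hkey : a2 * c2 ≤ ρ ^ 2 := by
    nlinarith [sq_nonneg (a2 - c2), mul_self_le_mul_self (by linarith : (0:ℝ) ≤ (a2 + c2)/2) hρge]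
  have hc2Sb : c2 ≤ Sb := by
    have h1 : a2 * c2 ≤ Sb * a2 := le_trans hkey hCS
    nlinarith
  -- choose i
  set t : ℝ := ((L \ T).card : ℝ) with ht
  have ht0 : 0 < t := by
    rw [ht]
    exact_mod_cast Finset.card_pos.mpr hBne
  have hchooseI : ∃ i ∈ L \ T, Sb / t ≤ ((fun ρ => M ρ i) ⬝ᵥ r) ^ 2 := by
    apply Finset.exists_le_of_sum_le hBne
    rw [Finset.sum_const]
    rw [nsmul_eq_mul, ← ht]
    rw [mul_div_cancel₀ _ (ne_of_gt ht0)]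
  obtain ⟨i, hiB, hIbound⟩ := hchooseI
  have hchooseJ : ∃ j ∈ T \ L, zf j ^ 2 ≤ c2 / t := by
    apply Finset.exists_le_of_sum_le hAne
    rw [Finset.sum_const, nsmul_eq_mul, hcardAB, ← ht, ← hc2]
    rw [mul_div_cancel₀ _ (ne_of_gt ht0)]
  obtain ⟨j, hjA, hJbound⟩ := hchooseJ
  refine ⟨i, hiB, j, hjA, ?_⟩
  have hiT : i ∉ T := (Finset.mem_sdiff.mp hiB).2
  have hjT : j ∈ T := (Finset.mem_sdiff.mp hjA).1
  -- LHS bounds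
  set di : ℝ := (residT M T *ᵥ fun ρ => M ρ i) ⬝ᵥ (residT M T *ᵥ fun ρ => M ρ i) with hdi
  have hdi_lb : 1 - δ ≤ di := resid_col_lb M hδ1' hRIP T (by omega) hiT
  have hdi_pos : 0 < di := by linarith
  have hdi_le1 : di ≤ 1 := by
    have := resid_dot_le M T hGT (fun ρ => M ρ i)
    rwa [hunit i] at this
  have hLnum : (residT M T *ᵥ fun ρ => M ρ i) ⬝ᵥ y = (fun ρ => M ρ i) ⬝ᵥ r := by
    rw [symm_dot_comm (residT_transpose M T hGT), ← hr]
  -- RHS analysis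
  set S' := T.erase j with hS'
  have hS'card : S'.card + 1 = k := by
    rw [hS', Finset.card_erase_add_one hjT, hT]
  have hGT' : IsUnit ((colsOf M S')ᵀ * colsOf M S').det :=
    isUnit_iff_ne_zero.mpr (ne_of_gt (gram_posdef M hδ1' hRIP S' (by omega)).det_pos)
  have hjS' : j ∉ S' := Finset.notMem_erase j T
  set dj : ℝ := (residT M S' *ᵥ fun ρ => M ρ j) ⬝ᵥ (residT M S' *ᵥ fun ρ => M ρ j) with hdj
  have hdj_lb : 1 - δ ≤ dj := resid_col_lb M hδ1' hRIP S' (by omega) hjS'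
  have hdj_pos : 0 < dj := by linarith
  have hdj_le1 : dj ≤ 1 := by
    have := resid_dot_le M S' hGT' (fun ρ => M ρ j)
    rwa [hunit j] at this
  -- the numerator identity
  have hA'r : (colsOf M S')ᵀ *ᵥ r = 0 := by
    funext l
    show (fun ρ => M ρ l.val) ⬝ᵥ r = 0
    · exact hmr0 l.val (Finset.mem_of_mem_erase l.2)
  have hR'r : residT M S' *ᵥ r = r := by
    show (1 - projT M S') *ᵥ r = r
    rw [Matrix.sub_mulVec, Matrix.one_mulVec, projT_mulVec, hA'r, Matrix.mulVec_zero,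
      Matrix.mulVec_zero, sub_zero]
  set z'' : {l // l ∈ S'} → ℝ := fun l => zf l.val with hz''
  have hzfsplit : zf = extend S' z'' + zf j • (Pi.single j 1 : Fin n → ℝ) := by
    funext l
    by_cases hl : l ∈ S'
    · have hlj : l ≠ j := Finset.ne_of_mem_erase hl
      rw [Pi.add_apply, extend_mem z'' hl, Pi.smul_apply, Pi.single_eq_of_ne hlj,
        smul_zero, add_zero]
    · by_cases hlj : l = j
      · subst hlj
        rw [Pi.add_apply, extend_not_mem z'' hl, Pi.smul_apply, Pi.single_eq_same,
          zero_add, smul_eq_mul, mul_one]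
      · have hlT : l ∉ T := fun hlT => hl (Finset.mem_erase.mpr ⟨hlj, hlT⟩)
        rw [Pi.add_apply, extend_not_mem z'' hl, Pi.smul_apply, Pi.single_eq_of_ne hlj,
          smul_zero, add_zero]
        exact extend_not_mem z hlT
  have hR'y : residT M S' *ᵥ y = r + zf j • (residT M S' *ᵥ (fun ρ => M ρ j)) := by
    conv_lhs => rw [hy_split]
    rw [Matrix.mulVec_add, hR'r]
    congr 1
    conv_lhs => rw [← mulVec_extend M T z, ← hzf, hzfsplit, Matrix.mulVec_add,
      Matrix.mulVec_add, mulVec_extend, Matrix.mulVec_mulVec, residT_mul_cols M S' hGT',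
      Matrix.zero_mulVec, Matrix.mulVec_smul, Matrix.mulVec_smul, col_single, zero_add]
  have hRnum : (residT M S' *ᵥ fun ρ => M ρ j) ⬝ᵥ y = zf j * dj := by
    rw [symm_dot_comm (residT_transpose M S' hGT'), hR'y, dotProduct_add,
      hmr0 j hjT, dotProduct_smul, zero_add, smul_eq_mul]
    congr 1
    rw [hdj, resid_dot_self M S' hGT']
  -- final chain
  rw [hLnum, hRnum]
  have hRHS : (zf j * dj) ^ 2 / dj = zf j ^ 2 * dj := by
    field_simp
  rw [hRHS]
  have h1 : zf j ^ 2 * dj ≤ zf j ^ 2 := mul_le_of_le_one_right (sq_nonneg _) hdj_le1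
  have h2 : c2 / t ≤ Sb / t := div_le_div_of_nonneg_right hc2Sb ht0.le
  have h4 : ((fun ρ => M ρ i) ⬝ᵥ r) ^ 2 ≤ ((fun ρ => M ρ i) ⬝ᵥ r) ^ 2 / di := by
    rw [le_div_iff₀ hdi_pos]
    nlinarith [sq_nonneg ((fun ρ => M ρ i) ⬝ᵥ r)]
  linarith [h1, hJbound, h2, hIbound, h4]

end
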